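/- Fix a real s > 3/2, and let L(A;s) = Σ'_{i,j,k∈ℤ} g(A;i,j,k)^{-s}. Then the partial derivative of L(A;s) with respect to A, evaluated at A = 1/2, equals 0. -/

import Mathlib

set_option maxHeartbeats 1000000


/-- The quadratic form `g(A;i,j,k) = (A(i+j)² + (j+k)² + (i+k)²)/(A+1)`. -/
noncomputable def cuboidalG (A : ℝ) (p : ℤ × ℤ × ℤ) : ℝ :=
  (A * ((p.1 : ℝ) + (p.2.1 : ℝ))^2 + ((p.2.1 : ℝ) + (p.2.2 : ℝ))^2 +
    ((p.1 : ℝ) + (p.2.2 : ℝ))^2) / (A + 1)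

/-- The Epstein zeta function `L(A;s) = Σ'_{(i,j,k)≠(0,0,0)} g(A;i,j,k)^{-s}`. -/
noncomputable def epsteinL (A s : ℝ) : ℝ :=
  ∑' p : {p : ℤ × ℤ × ℤ // p ≠ 0}, (cuboidalG A p.1) ^ (-s)

/- ### Auxiliary definitions -/

/-- `(i+j)²`. -/
noncomputable def cubAv (p : ℤ × ℤ × ℤ) : ℝ := ((p.1 : ℝ) + (p.2.1 : ℝ))^2

/-- `(j+k)² + (i+k)²`. -/
noncomputable def cubBv (p : ℤ × ℤ × ℤ) : ℝ :=
  ((p.2.1 : ℝ) + (p.2.2 : ℝ))^2 + ((p.1 : ℝ) + (p.2.2 : ℝ))^2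

/-- `i² + j² + k²`. -/
noncomputable def cubQ (p : ℤ × ℤ × ℤ) : ℝ := (p.1 : ℝ)^2 + (p.2.1 : ℝ)^2 + (p.2.2 : ℝ)^2

lemma cuboidalG_eq (A : ℝ) (p : ℤ × ℤ × ℤ) :
    cuboidalG A p = (A * cubAv p + cubBv p) / (A + 1) := by
  unfold cuboidalG cubAv cubBv; ring_nf

lemma cubAv_nonneg (p : ℤ × ℤ × ℤ) : 0 ≤ cubAv p := sq_nonneg _

lemma cubBv_nonneg (p : ℤ × ℤ × ℤ) : 0 ≤ cubBv p := by
  unfold cubBv; positivity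

lemma one_le_cubQ {p : ℤ × ℤ × ℤ} (hp : p ≠ 0) : 1 ≤ cubQ p := by
  obtain ⟨i, j, k⟩ := p
  have h : i ≠ 0 ∨ j ≠ 0 ∨ k ≠ 0 := by
    by_contra h
    push_neg at h
    exact hp (by simp [Prod.ext_iff, h.1, h.2.1, h.2.2])
  have key : ∀ n : ℤ, n ≠ 0 → (1 : ℝ) ≤ (n : ℝ)^2 := by
    intro n hn
    have : 1 ≤ n^2 := by nlinarith [Int.one_le_abs hn, sq_abs n, abs_nonneg n]
    exact_mod_cast (by exact_mod_cast this : (1:ℝ) ≤ ((n^2 : ℤ) : ℝ))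
  unfold cubQ
  rcases h with h | h | h
  · nlinarith [key i h, sq_nonneg (j:ℝ), sq_nonneg (k:ℝ)]
  · nlinarith [key j h, sq_nonneg (i:ℝ), sq_nonneg (k:ℝ)]
  · nlinarith [key k h, sq_nonneg (i:ℝ), sq_nonneg (j:ℝ)]

lemma cubN_le (p : ℤ × ℤ × ℤ) : cubAv p + cubBv p ≤ 4 * cubQ p := by
  obtain ⟨i, j, k⟩ := p
  unfold cubAv cubBv cubQ
  nlinarith [sq_nonneg ((i:ℝ) - j), sq_nonneg ((j:ℝ) - k), sq_nonneg ((i:ℝ) - k)]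

lemma cubQ_le_cubN (p : ℤ × ℤ × ℤ) : cubQ p ≤ cubAv p + cubBv p := by
  obtain ⟨i, j, k⟩ := p
  unfold cubAv cubBv cubQ
  nlinarith [sq_nonneg ((i:ℝ) + j + k)]

/-- Lower bound for `cuboidalG` on `Ioo (1/3) 1`. -/
lemma cuboidalG_lower {A : ℝ} (hA : A ∈ Set.Ioo (1/3 : ℝ) 1) {p : ℤ × ℤ × ℤ} (hp : p ≠ 0) :
    (1/12 : ℝ) * (1 + cubQ p) ≤ cuboidalG A p := by
  obtain ⟨hA1, hA2⟩ := hA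
  rw [cuboidalG_eq]
  have hQ := one_le_cubQ hp
  have hQN := cubQ_le_cubN p
  have ha := cubAv_nonneg p
  have hb := cubBv_nonneg p
  rw [le_div_iff₀ (by linarith)]
  nlinarith

lemma cuboidalG_pos {A : ℝ} (hA : A ∈ Set.Ioo (1/3 : ℝ) 1) {p : ℤ × ℤ × ℤ} (hp : p ≠ 0) :
    0 < cuboidalG A p := by
  have := cuboidalG_lower hA hp
  have := one_le_cubQ hp
  nlinarith

/- ### Summability -/

lemma summable_one_add_sq_int {t : ℝ} (ht : 1/2 < t) :
    Summable fun n : ℤ => (1 + (n : ℝ)^2) ^ (-t) := by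
  have base : Summable fun n : ℤ => |(n : ℝ)| ^ (-(2*t)) :=
    Real.summable_abs_int_rpow (by linarith)
  apply Summable.of_norm_bounded_eventually base
  have hfin : ({(0 : ℤ)} : Set ℤ).Finite := Set.finite_singleton _
  apply Filter.eventually_cofinite.2
  apply Set.Finite.subset hfin
  intro n hn
  simp only [Set.mem_setOf_eq, not_le] at hn
  by_contra h0
  simp only [Set.mem_singleton_iff] at h0
  have hn0 : (n : ℝ) ≠ 0 := by exact_mod_cast h0
  have h1 : (0:ℝ) < (n:ℝ)^2 := by positivity
  have h2 : (1 + (n : ℝ)^2) ^ (-t) ≤ ((n:ℝ)^2) ^ (-t) :=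
    Real.rpow_le_rpow_of_nonpos h1 (by linarith) (by linarith)
  have h3 : ((n:ℝ)^2) ^ (-t) = |(n : ℝ)| ^ (-(2*t)) := by
    rw [← sq_abs, ← Real.rpow_natCast |(n:ℝ)| 2, ← Real.rpow_mul (abs_nonneg _)]
    norm_num
  have h4 : ‖(1 + (n : ℝ)^2) ^ (-t)‖ = (1 + (n : ℝ)^2) ^ (-t) :=
    Real.norm_of_nonneg (Real.rpow_nonneg (by positivity) _)
  rw [h4, ← h3] at hn
  linarith

lemma summable_cubQ {s : ℝ} (hs : 3/2 < s) :
    Summable fun p : ℤ × ℤ × ℤ => (1 + cubQ p) ^ (-s) := by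
  have ht : 1/2 < s/3 := by linarith
  have h1 := summable_one_add_sq_int ht
  have hnn : ∀ n : ℤ, 0 ≤ (1 + (n : ℝ)^2) ^ (-(s/3)) :=
    fun n => Real.rpow_nonneg (by positivity) _
  have h2 : Summable fun q : ℤ × ℤ => (1 + (q.1 : ℝ)^2) ^ (-(s/3)) * (1 + (q.2 : ℝ)^2) ^ (-(s/3)) :=
    h1.mul_of_nonneg h1 hnn hnn
  have h3 : Summable fun p : ℤ × ℤ × ℤ =>
      (1 + (p.1 : ℝ)^2) ^ (-(s/3)) *
        ((1 + (p.2.1 : ℝ)^2) ^ (-(s/3)) * (1 + (p.2.2 : ℝ)^2) ^ (-(s/3))) :=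
    h1.mul_of_nonneg h2 hnn (fun q => mul_nonneg (hnn q.1) (hnn q.2))
  have hQnn : ∀ p : ℤ × ℤ × ℤ, 0 ≤ 1 + cubQ p := by
    intro p; unfold cubQ; positivity
  apply h3.of_nonneg_of_le (fun p => Real.rpow_nonneg (hQnn p) _)
  intro p
  obtain ⟨i, j, k⟩ := p
  set x := (i : ℝ)^2 with hx
  set y := (j : ℝ)^2 with hy
  set z := (k : ℝ)^2 with hz
  have hx0 : 0 ≤ x := sq_nonneg _
  have hy0 : 0 ≤ y := sq_nonneg _
  have hz0 : 0 ≤ z := sq_nonneg _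
  have hQ : cubQ (i, j, k) = x + y + z := rfl
  rw [hQ]
  have hP : (1+x) * ((1+y) * (1+z)) ≤ (1 + (x+y+z))^3 := by
    have h1x : 1+x ≤ 1+(x+y+z) := by linarith
    have h1y : 1+y ≤ 1+(x+y+z) := by linarith
    have h1z : 1+z ≤ 1+(x+y+z) := by linarith
    have hyz : (1+y) * (1+z) ≤ (1+(x+y+z)) * (1+(x+y+z)) :=
      mul_le_mul h1y h1z (by linarith) (by linarith)
    calc (1+x) * ((1+y) * (1+z)) ≤ (1+(x+y+z)) * ((1+(x+y+z)) * (1+(x+y+z))) :=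
          mul_le_mul h1x hyz (by positivity) (by linarith)
      _ = (1 + (x+y+z))^3 := by ring
  have hstep : (1 + (x+y+z)) ^ (-s) = ((1 + (x+y+z))^(3:ℕ)) ^ (-(s/3)) := by
    rw [← Real.rpow_natCast (1 + (x+y+z)) 3, ← Real.rpow_mul (by linarith)]
    congr 1
    push_cast
    ring
  rw [hstep]
  calc ((1 + (x+y+z))^(3:ℕ)) ^ (-(s/3))
      ≤ ((1+x) * ((1+y) * (1+z))) ^ (-(s/3)) :=
        Real.rpow_le_rpow_of_nonpos (by positivity) hP (by linarith)
    _ = (1+x) ^ (-(s/3)) * ((1+y) ^ (-(s/3)) * (1+z) ^ (-(s/3))) := by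
        rw [Real.mul_rpow (by linarith) (by positivity),
          Real.mul_rpow (by linarith) (by linarith)]

/- ### The termwise derivative -/

/-- Derivative of `A ↦ cuboidalG A p ^ (-s)`. -/
noncomputable def cubD (s : ℝ) (p : ℤ × ℤ × ℤ) (A : ℝ) : ℝ :=
  -s * cuboidalG A p ^ (-s - 1) * ((cubAv p - cubBv p) / (A + 1)^2)

lemma hasDerivAt_cuboidalG {A : ℝ} (hA : A ∈ Set.Ioo (1/3 : ℝ) 1) (p : ℤ × ℤ × ℤ) :
    HasDerivAt (fun B => cuboidalG B p) ((cubAv p - cubBv p) / (A + 1)^2) A := by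
  have hne : A + 1 ≠ 0 := by have := hA.1; intro h; linarith
  have hnum : HasDerivAt (fun B : ℝ => B * cubAv p + cubBv p) (cubAv p) A :=
    (hasDerivAt_mul_const (cubAv p)).add_const (cubBv p)
  have hden : HasDerivAt (fun B : ℝ => B + 1) 1 A := (hasDerivAt_id A).add_const 1
  have h := hnum.div hden hne
  have heq : (cubAv p * (A + 1) - (A * cubAv p + cubBv p) * 1) / (A + 1)^2
      = (cubAv p - cubBv p) / (A + 1)^2 := by
    field_simp
    ring
  rw [heq] at h
  exact h.congr_of_eventuallyEq (Filter.Eventually.of_forall fun B => cuboidalG_eq B p)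

lemma hasDerivAt_term {s : ℝ} (hs : 3/2 < s) {A : ℝ} (hA : A ∈ Set.Ioo (1/3 : ℝ) 1)
    (p : {p : ℤ × ℤ × ℤ // p ≠ 0}) :
    HasDerivAt (fun B => cuboidalG B p.1 ^ (-s)) (cubD s p.1 A) A := by
  have h1 := hasDerivAt_cuboidalG hA p.1
  have hpos := cuboidalG_pos hA p.2
  have h2 := h1.rpow_const (p := -s) (Or.inl (ne_of_gt hpos))
  unfold cubD
  convert h2 using 1
  ring

/-- The summable bound for derivatives. -/
noncomputable def cubU (s : ℝ) (p : ℤ × ℤ × ℤ) : ℝ :=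
  4 * s * (1/12 : ℝ) ^ (-s - 1) * (1 + cubQ p) ^ (-s)

lemma rpow_shift {x s : ℝ} (hx : 0 < x) : x ^ (-s - 1) * x = x ^ (-s) := by
  have h := (Real.rpow_add hx (-s - 1) 1).symm
  rw [Real.rpow_one] at h
  rw [h]
  ring_nf

lemma cubD_bound {s : ℝ} (hs : 3/2 < s) {A : ℝ} (hA : A ∈ Set.Ioo (1/3 : ℝ) 1)
    (p : {p : ℤ × ℤ × ℤ // p ≠ 0}) :
    ‖cubD s p.1 A‖ ≤ cubU s p.1 := by
  have hpos := cuboidalG_pos hA p.2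
  have hlow := cuboidalG_lower hA p.2
  have hQ := one_le_cubQ p.2
  have hQ0 : (0:ℝ) < 1 + cubQ p.1 := by linarith
  have ha := cubAv_nonneg p.1
  have hb := cubBv_nonneg p.1
  have hN := cubN_le p.1
  have hA1 := hA.1
  have hden : (1:ℝ) ≤ (A + 1)^2 := by nlinarith
  have habs : |cubAv p.1 - cubBv p.1| ≤ 4 * (1 + cubQ p.1) := by
    rw [abs_le]; constructor <;> nlinarith
  have hg1 : cuboidalG A p.1 ^ (-s - 1) ≤ ((1/12 : ℝ) * (1 + cubQ p.1)) ^ (-s - 1) :=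
    Real.rpow_le_rpow_of_nonpos (by positivity) hlow (by linarith)
  have hgnn : 0 ≤ cuboidalG A p.1 ^ (-s - 1) := Real.rpow_nonneg hpos.le _
  have hfrac : |(cubAv p.1 - cubBv p.1) / (A + 1)^2| ≤ 4 * (1 + cubQ p.1) := by
    rw [abs_div, abs_of_nonneg (by positivity : (0:ℝ) ≤ (A+1)^2)]
    calc |cubAv p.1 - cubBv p.1| / (A + 1)^2 ≤ |cubAv p.1 - cubBv p.1| :=
          div_le_self (abs_nonneg _) hden
      _ ≤ 4 * (1 + cubQ p.1) := habs
  have step : ‖cubD s p.1 A‖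
      = s * (cuboidalG A p.1 ^ (-s - 1) * |(cubAv p.1 - cubBv p.1) / (A + 1)^2|) := by
    unfold cubD
    rw [norm_mul, norm_mul, Real.norm_eq_abs, Real.norm_eq_abs, Real.norm_eq_abs,
      abs_of_nonpos (by linarith : -s ≤ 0), abs_of_nonneg hgnn]
    ring
  rw [step]
  have hmulrp : ((1/12 : ℝ) * (1 + cubQ p.1)) ^ (-s - 1)
      = (1/12 : ℝ) ^ (-s - 1) * (1 + cubQ p.1) ^ (-s - 1) :=
    Real.mul_rpow (by norm_num) hQ0.le
  calc s * (cuboidalG A p.1 ^ (-s - 1) * |(cubAv p.1 - cubBv p.1) / (A + 1)^2|)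
      ≤ s * (((1/12 : ℝ) * (1 + cubQ p.1)) ^ (-s - 1) * (4 * (1 + cubQ p.1))) := by
        apply mul_le_mul_of_nonneg_left _ (by linarith : (0:ℝ) ≤ s)
        exact mul_le_mul hg1 hfrac (abs_nonneg _) (Real.rpow_nonneg (by positivity) _)
    _ = 4 * s * (1/12 : ℝ) ^ (-s - 1) * ((1 + cubQ p.1) ^ (-s - 1) * (1 + cubQ p.1)) := by
        rw [hmulrp]; ring
    _ = cubU s p.1 := by rw [rpow_shift hQ0]; rfl

lemma summable_cubU {s : ℝ} (hs : 3/2 < s) :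
    Summable fun p : {p : ℤ × ℤ × ℤ // p ≠ 0} => cubU s p.1 := by
  have := ((summable_cubQ hs).subtype {p : ℤ × ℤ × ℤ | p ≠ 0}).mul_left
    (4 * s * (1/12 : ℝ) ^ (-s - 1))
  exact this

lemma summable_term_half {s : ℝ} (hs : 3/2 < s) :
    Summable fun p : {p : ℤ × ℤ × ℤ // p ≠ 0} => cuboidalG (1/2) p.1 ^ (-s) := by
  have hmem : (1/2 : ℝ) ∈ Set.Ioo (1/3 : ℝ) 1 := by norm_num
  have hsum := ((summable_cubQ hs).subtype {p : ℤ × ℤ × ℤ | p ≠ 0}).mul_left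
    ((1/12 : ℝ) ^ (-s))
  apply Summable.of_norm_bounded hsum
  intro p
  have hpos := cuboidalG_pos hmem p.2
  have hlow := cuboidalG_lower hmem p.2
  have hQ0 : (0:ℝ) < 1 + cubQ p.1 := by have := one_le_cubQ p.2; linarith
  rw [Real.norm_of_nonneg (Real.rpow_nonneg hpos.le _)]
  calc cuboidalG (1/2) p.1 ^ (-s)
      ≤ ((1/12 : ℝ) * (1 + cubQ p.1)) ^ (-s) :=
        Real.rpow_le_rpow_of_nonpos (by positivity) hlow (by linarith)
    _ = (1/12 : ℝ) ^ (-s) * (1 + cubQ p.1) ^ (-s) := Real.mul_rpow (by norm_num) hQ0.le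

/- ### The symmetries -/

/-- `(i,j,k) ↦ (-i-j-k, -k, j+k)`, a bcc automorphism. -/
def cubT1 : (ℤ × ℤ × ℤ) ≃ (ℤ × ℤ × ℤ) where
  toFun p := (-p.1 - p.2.1 - p.2.2, -p.2.2, p.2.1 + p.2.2)
  invFun p := (-p.1 - p.2.2, p.2.1 + p.2.2, -p.2.1)
  left_inv := by rintro ⟨i, j, k⟩; simp [Prod.ext_iff] <;> omega
  right_inv := by rintro ⟨i, j, k⟩; simp [Prod.ext_iff] <;> omega

/-- `(i,j,k) ↦ (-i-j-k, k, j)`, a bcc automorphism (involution). -/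
def cubT2 : (ℤ × ℤ × ℤ) ≃ (ℤ × ℤ × ℤ) where
  toFun p := (-p.1 - p.2.1 - p.2.2, p.2.2, p.2.1)
  invFun p := (-p.1 - p.2.1 - p.2.2, p.2.2, p.2.1)
  left_inv := by rintro ⟨i, j, k⟩; simp [Prod.ext_iff] <;> omega
  right_inv := by rintro ⟨i, j, k⟩; simp [Prod.ext_iff] <;> omega

lemma cubT1_zero : cubT1 0 = 0 := rfl
lemma cubT2_zero : cubT2 0 = 0 := rfl
lemma cubT1_symm_zero : cubT1.symm 0 = 0 := rfl

/-- Lift an equiv fixing `0` to the subtype of nonzero triples. -/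
def cubLift (e : (ℤ × ℤ × ℤ) ≃ (ℤ × ℤ × ℤ)) (h0 : e 0 = 0) :
    {p : ℤ × ℤ × ℤ // p ≠ 0} ≃ {p : ℤ × ℤ × ℤ // p ≠ 0} :=
  Equiv.subtypeEquiv e (fun a => not_congr ⟨fun h => by rw [h, h0], fun h => by
    apply e.injective; rw [h, h0]⟩)

lemma cubLift_coe (e : (ℤ × ℤ × ℤ) ≃ (ℤ × ℤ × ℤ)) (h0 : e 0 = 0)
    (p : {p : ℤ × ℤ × ℤ // p ≠ 0}) : ((cubLift e h0 p : {p : ℤ × ℤ × ℤ // p ≠ 0}) : ℤ × ℤ × ℤ) = e p.1 := rfl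

lemma cuboidalG_T1 (p : ℤ × ℤ × ℤ) : cuboidalG (1/2) (cubT1 p) = cuboidalG (1/2) p := by
  obtain ⟨i, j, k⟩ := p
  unfold cuboidalG cubT1
  simp only [Equiv.coe_fn_mk]
  push_cast
  ring

lemma cuboidalG_T2 (p : ℤ × ℤ × ℤ) : cuboidalG (1/2) (cubT2 p) = cuboidalG (1/2) p := by
  obtain ⟨i, j, k⟩ := p
  unfold cuboidalG cubT2
  simp only [Equiv.coe_fn_mk]
  push_cast
  ring

lemma cuboidalG_T1symm (p : ℤ × ℤ × ℤ) : cuboidalG (1/2) (cubT1.symm p) = cuboidalG (1/2) p := by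
  obtain ⟨i, j, k⟩ := p
  show cuboidalG (1/2) (-i - k, j + k, -j) = cuboidalG (1/2) (i, j, k)
  unfold cuboidalG
  push_cast
  ring

lemma cubAB_sum (p : ℤ × ℤ × ℤ) :
    (cubAv (cubT1 p) - cubBv (cubT1 p)) + (cubAv (cubT2 p) - cubBv (cubT2 p))
      + (cubAv (cubT1.symm p) - cubBv (cubT1.symm p)) = 0 := by
  obtain ⟨i, j, k⟩ := p
  show (cubAv (-i - j - k, -k, j + k) - cubBv (-i - j - k, -k, j + k))
      + (cubAv (-i - j - k, k, j) - cubBv (-i - j - k, k, j))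
      + (cubAv (-i - k, j + k, -j) - cubBv (-i - k, j + k, -j)) = 0
  unfold cubAv cubBv
  push_cast
  ring

/- ### Main theorem -/

theorem epsteinL_deriv_at_half (s : ℝ) (hs : s > 3/2) :
    deriv (fun A : ℝ => epsteinL A s) (1/2) = 0 := by
  have hmem : (1/2 : ℝ) ∈ Set.Ioo (1/3 : ℝ) 1 := by norm_num
  -- Step 1: the derivative is the sum of termwise derivatives
  have key : HasDerivAt (fun A : ℝ => epsteinL A s)
      (∑' p : {p : ℤ × ℤ × ℤ // p ≠ 0}, cubD s p.1 (1/2)) (1/2) := by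
    have h := hasDerivAt_tsum_of_isPreconnected (summable_cubU hs) isOpen_Ioo
      (convex_Ioo (1/3 : ℝ) 1).isPreconnected
      (fun p A hA => hasDerivAt_term hs hA p)
      (fun p A hA => cubD_bound hs hA p)
      hmem (summable_term_half hs) hmem
    exact h.congr_of_eventuallyEq (Filter.Eventually.of_forall fun A => by rfl)
  -- Step 2: the sum of termwise derivatives vanishes by bcc symmetry
  have hzero : (∑' p : {p : ℤ × ℤ × ℤ // p ≠ 0}, cubD s p.1 (1/2)) = 0 := by
    set h : {p : ℤ × ℤ × ℤ // p ≠ 0} → ℝ := fun p => cubD s p.1 (1/2) with hh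
    have hsum : Summable h :=
      Summable.of_norm_bounded (summable_cubU hs) (fun p => cubD_bound hs hmem p)
    set E1 := cubLift cubT1 cubT1_zero
    set E2 := cubLift cubT2 cubT2_zero
    set E3 := cubLift cubT1.symm cubT1_symm_zero
    have hsum1 : Summable (fun p => h (E1 p)) := (E1.summable_iff).2 hsum
    have hsum2 : Summable (fun p => h (E2 p)) := (E2.summable_iff).2 hsum
    have hsum3 : Summable (fun p => h (E3 p)) := (E3.summable_iff).2 hsum
    have hsum12 : Summable (fun p => h (E1 p) + h (E2 p)) := hsum1.add hsum2
    have hpt : ∀ p, h (E1 p) + h (E2 p) + h (E3 p) = 0 := by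
      intro p
      simp only [hh, cubD]
      rw [cubLift_coe, cubLift_coe, cubLift_coe, cuboidalG_T1, cuboidalG_T2, cuboidalG_T1symm]
      have hid := cubAB_sum p.1
      set g := cuboidalG (1/2) p.1 ^ (-s - 1)
      linear_combination (-s * g / ((1/2 : ℝ) + 1)^2) * hid
    have h1 : ∑' p, h (E1 p) = ∑' p, h p := E1.tsum_eq h
    have h2 : ∑' p, h (E2 p) = ∑' p, h p := E2.tsum_eq h
    have h3 : ∑' p, h (E3 p) = ∑' p, h p := E3.tsum_eq h
    have hadd : ∑' p, (h (E1 p) + h (E2 p) + h (E3 p))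
        = (∑' p, h (E1 p)) + (∑' p, h (E2 p)) + (∑' p, h (E3 p)) := by
      rw [Summable.tsum_add hsum12 hsum3, Summable.tsum_add hsum1 hsum2]
    have hZ : ∑' p : {p : ℤ × ℤ × ℤ // p ≠ 0}, (h (E1 p) + h (E2 p) + h (E3 p)) = 0 := by
      simp only [hpt]; exact tsum_zero
    rw [hadd, h1, h2, h3] at hZ
    linarith
  rw [hzero] at key
  exact key.deriv
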